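/- Let ρ_A = ∑_{j=1}^N p_j ρ_A^j be a convex combination of density operators with p_j > 0. Then for any ε ≥ 0, the smooth zero-Rényi entropy satisfies H₀^ε(A)_ρ ≤ max_j H₀^ε(A)_{ρ^j} + log N. -/

import Mathlib

open scoped Classical Kronecker ComplexOrder

noncomputable section

namespace QIT

variable {ι κ γ : Type*} [Fintype ι] [DecidableEq ι] [Fintype κ] [DecidableEq κ]
  [Fintype γ] [DecidableEq γ]

/-- Trace norm `‖A‖₁ = tr √(AᴴA)`. -/
def traceNorm (A : Matrix ι ι ℂ) : ℝ :=
  ((Matrix.posSemidef_conjTranspose_mul_self A).1.eigenvectorUnitary.1 *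
    Matrix.diagonal (((↑) : ℝ → ℂ) ∘ (√·) ∘ (Matrix.posSemidef_conjTranspose_mul_self A).1.eigenvalues) *
    (star (Matrix.posSemidef_conjTranspose_mul_self A).1.eigenvectorUnitary :
      Matrix ι ι ℂ)).trace.re

/-- Matrix square root (of a PSD matrix; junk value `0` otherwise). -/
def msqrt (A : Matrix ι ι ℂ) : Matrix ι ι ℂ :=
  if h : A.PosSemidef then h.1.eigenvectorUnitary.1 *
    Matrix.diagonal (((↑) : ℝ → ℂ) ∘ (√·) ∘ h.1.eigenvalues) *
    (star h.1.eigenvectorUnitary : Matrix ι ι ℂ) else 0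

/-- Fidelity `F(ρ,σ) = ‖√ρ√σ‖₁`. -/
def fidelity (ρ σ : Matrix ι ι ℂ) : ℝ := traceNorm (msqrt ρ * msqrt σ)

/-- Generalized fidelity. -/
def genFid (ρ σ : Matrix ι ι ℂ) : ℝ :=
  fidelity ρ σ + Real.sqrt ((1 - ρ.trace.re) * (1 - σ.trace.re))

/-- Purified distance. -/
def purifiedDist (ρ σ : Matrix ι ι ℂ) : ℝ := Real.sqrt (1 - genFid ρ σ ^ 2)

def IsSubnormalized (ρ : Matrix ι ι ℂ) : Prop := ρ.PosSemidef ∧ ρ.trace.re ≤ 1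

def IsDensity (ρ : Matrix ι ι ℂ) : Prop := ρ.PosSemidef ∧ ρ.trace = 1

/-- Max-relative entropy `D_max(ρ‖σ) = inf {λ : 2^λ σ ≥ ρ}`. -/
def Dmax (ρ σ : Matrix ι ι ℂ) : ℝ :=
  sInf {l : ℝ | ((((2:ℝ) ^ l : ℝ) : ℂ) • σ - ρ).PosSemidef}

/-- Partial trace over the first factor. -/
def ptrace₁ (ρ : Matrix (ι × κ) (ι × κ) ℂ) : Matrix κ κ ℂ :=
  Matrix.of fun (b b' : κ) => ∑ a, ρ (a, b) (a, b')

/-- Partial trace over the second factor. -/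
def ptrace₂ (ρ : Matrix (ι × κ) (ι × κ) ℂ) : Matrix ι ι ℂ :=
  Matrix.of fun (a a' : ι) => ∑ b, ρ (a, b) (a', b)

/-- Max-information `I_max(A:B)_ρ = inf_{σ_B} D_max(ρ_{AB}‖ρ_A ⊗ σ_B)`. -/
def Imax (ρ : Matrix (ι × κ) (ι × κ) ℂ) : ℝ :=
  sInf {x : ℝ | ∃ σ : Matrix κ κ ℂ, IsDensity σ ∧ x = Dmax ρ (ptrace₂ ρ ⊗ₖ σ)}

/-- Conditional min-entropy `H_min(A|B)_ρ = −inf_{σ_B} D_max(ρ_{AB}‖Id_A ⊗ σ_B)`. -/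
def HminCond (ρ : Matrix (ι × κ) (ι × κ) ℂ) : ℝ :=
  - sInf {x : ℝ | ∃ σ : Matrix κ κ ℂ, IsDensity σ ∧ x = Dmax ρ ((1 : Matrix ι ι ℂ) ⊗ₖ σ)}

/-- Largest eigenvalue (operator norm for PSD matrices). -/
def maxEig (ρ : Matrix ι ι ℂ) : ℝ :=
  if h : ρ.IsHermitian then ⨆ i, h.eigenvalues i else 0

/-- Zero-Rényi entropy `H₀ = log rank`. -/
def H0 (ρ : Matrix ι ι ℂ) : ℝ := Real.logb 2 ρ.rank

/-- Min-entropy `H_min = −log ‖ρ‖_∞`. -/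
def Hmin (ρ : Matrix ι ι ℂ) : ℝ := - Real.logb 2 (maxEig ρ)

/-- Max-entropy `H_max = 2 log tr √ρ`. -/
def Hmax (ρ : Matrix ι ι ℂ) : ℝ := 2 * Real.logb 2 (msqrt ρ).trace.re

def smoothH0 (ε : ℝ) (ρ : Matrix ι ι ℂ) : ℝ :=
  sInf {x : ℝ | ∃ σ : Matrix ι ι ℂ, IsSubnormalized σ ∧ purifiedDist σ ρ ≤ ε ∧ x = H0 σ}

def smoothHmax (ε : ℝ) (ρ : Matrix ι ι ℂ) : ℝ :=
  sInf {x : ℝ | ∃ σ : Matrix ι ι ℂ, IsSubnormalized σ ∧ purifiedDist σ ρ ≤ ε ∧ x = Hmax σ}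

def smoothImax (ε : ℝ) (ρ : Matrix (ι × κ) (ι × κ) ℂ) : ℝ :=
  sInf {x : ℝ | ∃ σ : Matrix (ι × κ) (ι × κ) ℂ,
    IsSubnormalized σ ∧ purifiedDist σ ρ ≤ ε ∧ x = Imax σ}

open scoped MatrixOrder in
lemma sqrtAux_eq_cfc {A : Matrix ι ι ℂ} (h : A.PosSemidef) :
    h.1.eigenvectorUnitary.1 * Matrix.diagonal (((↑) : ℝ → ℂ) ∘ (√·) ∘ h.1.eigenvalues) *
      (star h.1.eigenvectorUnitary : Matrix ι ι ℂ) = CFC.sqrt A := by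
  rw [CFC.sqrt_eq_real_sqrt A h.nonneg, cfcₙ_eq_cfc, h.1.cfc_eq, Matrix.IsHermitian.cfc, Unitary.conjStarAlgAut_apply]
  rfl

/-- Matrix square root of a PSD matrix via the spectral decomposition. -/
def _root_.Matrix.PosSemidef.sqrt {A : Matrix ι ι ℂ} (h : A.PosSemidef) : Matrix ι ι ℂ :=
  h.1.eigenvectorUnitary.1 * Matrix.diagonal (((↑) : ℝ → ℂ) ∘ (√·) ∘ h.1.eigenvalues) *
    (star h.1.eigenvectorUnitary : Matrix ι ι ℂ)

open scoped MatrixOrder in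
lemma _root_.Matrix.PosSemidef.posSemidef_sqrt {A : Matrix ι ι ℂ} (h : A.PosSemidef) :
    h.sqrt.PosSemidef := by
  unfold Matrix.PosSemidef.sqrt
  rw [sqrtAux_eq_cfc h]
  exact Matrix.nonneg_iff_posSemidef.mp (CFC.sqrt_nonneg A)

open scoped MatrixOrder in
lemma _root_.Matrix.PosSemidef.sqrt_mul_self {A : Matrix ι ι ℂ} (h : A.PosSemidef) :
    h.sqrt * h.sqrt = A := by
  unfold Matrix.PosSemidef.sqrt
  rw [sqrtAux_eq_cfc h]
  exact CFC.sqrt_mul_sqrt_self A h.nonneg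

open scoped MatrixOrder in
lemma _root_.Matrix.PosSemidef.eq_sqrt_of_sq_eq {A : Matrix ι ι ℂ} (hA : A.PosSemidef)
    (B : Matrix ι ι ℂ) {hB : B.PosSemidef} (hAB : A ^ 2 = B) : A = hB.sqrt := by
  unfold Matrix.PosSemidef.sqrt
  rw [sqrtAux_eq_cfc hB]
  subst hAB
  rw [CFC.sqrt_sq A hA.nonneg]

lemma traceNorm_eq (A : Matrix ι ι ℂ) :
    traceNorm A = (Matrix.posSemidef_conjTranspose_mul_self A).sqrt.trace.re := rfl

section Aux

open Matrix in
section
variable {μ : Type*} [Fintype μ] [DecidableEq μ] (U : Matrix ι ι ℂ)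





section conj

/-- conjugation of a real diagonal by U -/

def conjDiag (f : ι → ℝ) : Matrix ι ι ℂ :=
  U * Matrix.diagonal (fun i => ((f i : ℝ) : ℂ)) * Uᴴ

lemma conjDiag_mul (hU : Uᴴ * U = 1) (f g : ι → ℝ) :
    conjDiag U f * conjDiag U g = conjDiag U (f * g) := by
  unfold conjDiag
  rw [Matrix.mul_assoc, Matrix.mul_assoc, ← Matrix.mul_assoc Uᴴ (U * _), ← Matrix.mul_assoc Uᴴ U,
    hU, Matrix.one_mul, ← Matrix.mul_assoc, ← Matrix.mul_assoc, Matrix.mul_assoc U,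
    Matrix.diagonal_mul_diagonal]
  congr 2
  ext i
  simp

lemma conjDiag_one (hU' : U * Uᴴ = 1) : conjDiag U (1 : ι → ℝ) = 1 := by
  unfold conjDiag
  simpa using hU'

lemma conjDiag_add (f g : ι → ℝ) :
    conjDiag U f + conjDiag U g = conjDiag U (f + g) := by
  unfold conjDiag
  rw [← Matrix.add_mul, ← Matrix.mul_add, Matrix.diagonal_add]
  congr 2
  ext i
  simp

lemma conjDiag_sub (f g : ι → ℝ) :
    conjDiag U f - conjDiag U g = conjDiag U (f - g) := by
  unfold conjDiag
  rw [← Matrix.sub_mul, ← Matrix.mul_sub, Matrix.diagonal_sub]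
  congr 2
  ext i
  simp

lemma conjDiag_conjTranspose (f : ι → ℝ) : (conjDiag U f)ᴴ = conjDiag U f := by
  unfold conjDiag
  rw [Matrix.conjTranspose_mul, Matrix.conjTranspose_mul, Matrix.conjTranspose_conjTranspose,
    Matrix.diagonal_conjTranspose, Matrix.mul_assoc]
  congr 2
  ext i j
  simp only [Matrix.diagonal, Matrix.of_apply, Pi.star_apply]
  split <;> simp

lemma conjDiag_posSemidef (f : ι → ℝ) (hf : ∀ i, 0 ≤ f i) : (conjDiag U f).PosSemidef := by
  unfold conjDiag
  exact Matrix.PosSemidef.mul_mul_conjTranspose_same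
    (Matrix.posSemidef_diagonal_iff.mpr fun i => by
      rw [Complex.zero_le_real]; exact hf i) U

lemma conjDiag_zero : conjDiag U (0 : ι → ℝ) = 0 := by
  unfold conjDiag
  simp

end conj

lemma eigU_mul_star {A : Matrix ι ι ℂ} (hA : A.IsHermitian) :
    (hA.eigenvectorUnitary : Matrix ι ι ℂ) * (hA.eigenvectorUnitary : Matrix ι ι ℂ)ᴴ = 1 := by
  rw [← Matrix.star_eq_conjTranspose]
  exact (Matrix.mem_unitaryGroup_iff).mp hA.eigenvectorUnitary.2

lemma star_mul_eigU {A : Matrix ι ι ℂ} (hA : A.IsHermitian) :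
    (hA.eigenvectorUnitary : Matrix ι ι ℂ)ᴴ * (hA.eigenvectorUnitary : Matrix ι ι ℂ) = 1 := by
  rw [← Matrix.star_eq_conjTranspose]
  exact (Matrix.mem_unitaryGroup_iff').mp hA.eigenvectorUnitary.2

lemma spectral_conjDiag {P : Matrix ι ι ℂ} (hP : P.PosSemidef) :
    P = conjDiag (hP.1.eigenvectorUnitary : Matrix ι ι ℂ) hP.1.eigenvalues := by
  have h := hP.1.spectral_theorem
  unfold conjDiag
  rw [← Matrix.star_eq_conjTranspose]
  exact h

lemma contraction_decomp {P : Matrix ι ι ℂ} (hP : P.PosSemidef) (Y : Matrix ι μ ℂ)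
    (hY : Y * Yᴴ = P * P) :
    ∃ W : Matrix ι μ ℂ, Y = P * W ∧ (1 - W * Wᴴ).PosSemidef := by
  set U : Matrix ι ι ℂ := (hP.1.eigenvectorUnitary : Matrix ι ι ℂ) with hUdef
  have hU : Uᴴ * U = 1 := star_mul_eigU hP.1
  have hU' : U * Uᴴ = 1 := eigU_mul_star hP.1
  set lam : ι → ℝ := hP.1.eigenvalues with hlamdef
  have hlam : ∀ i, 0 ≤ lam i := fun i => hP.eigenvalues_nonneg i
  have hspec : P = conjDiag U lam := spectral_conjDiag hP
  set pproj : ι → ℝ := fun i => if lam i = 0 then 0 else 1 with hpdef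
  refine ⟨conjDiag U (lam⁻¹) * Y, ?_, ?_⟩
  · -- P * (C lam⁻¹ * Y) = Y
    have hfun : lam * lam⁻¹ = pproj := by
      funext i
      by_cases h : lam i = 0 <;> simp [hpdef, h] <;> field_simp
    have h1 : P * (conjDiag U lam⁻¹ * Y) = conjDiag U pproj * Y := by
      rw [hspec, ← Matrix.mul_assoc, conjDiag_mul U hU, hfun]
    have h2 : conjDiag U (1 - pproj) * Y = 0 := by
      rw [← Matrix.self_mul_conjTranspose_eq_zero]
      rw [Matrix.conjTranspose_mul, conjDiag_conjTranspose, Matrix.mul_assoc,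
        ← Matrix.mul_assoc Y, hY]
      rw [hspec, Matrix.mul_assoc, conjDiag_mul U hU, ← Matrix.mul_assoc,
        conjDiag_mul U hU, conjDiag_mul U hU]
      have hfun : (1 - pproj) * lam * (lam * (1 - pproj)) = 0 := by
        funext i
        by_cases h : lam i = 0 <;> simp [hpdef, h]
      rw [hfun, conjDiag_zero U]
    have h3 : conjDiag U pproj * Y = Y := by
      have := congrArg (· + conjDiag U pproj * Y) h2
      simp only [zero_add] at this
      rw [← this, ← Matrix.add_mul, conjDiag_add U]
      have hfun : (1 - pproj) + pproj = 1 := by funext i; simp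
      rw [hfun, conjDiag_one U hU', Matrix.one_mul]
    rw [h1, h3]
  · -- contraction
    have hWW : (conjDiag U lam⁻¹ * Y) * (conjDiag U lam⁻¹ * Y)ᴴ = conjDiag U pproj := by
      rw [Matrix.conjTranspose_mul, conjDiag_conjTranspose, Matrix.mul_assoc,
        ← Matrix.mul_assoc Y, hY, hspec, Matrix.mul_assoc, conjDiag_mul U hU,
        ← Matrix.mul_assoc, conjDiag_mul U hU, conjDiag_mul U hU]
      have hfun : lam⁻¹ * lam * (lam * lam⁻¹) = pproj := by
        funext i
        by_cases h : lam i = 0 <;> simp [hpdef, h] <;> field_simp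
      rw [hfun]
    rw [hWW, ← conjDiag_one U hU', conjDiag_sub U]
    exact conjDiag_posSemidef U _ (fun i => by by_cases h : lam i = 0 <;> simp [hpdef, h])

lemma dot_inner_eq (a b : μ → ℂ) :
    (inner ℂ ((WithLp.equiv 2 (μ → ℂ)).symm a) ((WithLp.equiv 2 (μ → ℂ)).symm b) : ℂ)
      = dotProduct (star a) b := by
  simp [PiLp.inner_apply, dotProduct, RCLike.inner_apply, mul_comm]

lemma dot_cs (a b : μ → ℂ) : ‖dotProduct (star a) b‖ ≤
    Real.sqrt ((dotProduct (star a) a).re) *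
    Real.sqrt ((dotProduct (star b) b).re) := by
  set x : EuclideanSpace ℂ μ := (WithLp.equiv 2 (μ → ℂ)).symm a
  set y : EuclideanSpace ℂ μ := (WithLp.equiv 2 (μ → ℂ)).symm b
  have h1 : (inner ℂ x y : ℂ) = dotProduct (star a) b := dot_inner_eq a b
  have hx : ‖x‖ = Real.sqrt ((dotProduct (star a) a).re) := by
    rw [norm_eq_sqrt_re_inner (𝕜 := ℂ), ← dot_inner_eq a a]
    rfl
  have hy : ‖y‖ = Real.sqrt ((dotProduct (star b) b).re) := by
    rw [norm_eq_sqrt_re_inner (𝕜 := ℂ), ← dot_inner_eq b b]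
    rfl
  rw [← h1, ← hx, ← hy]
  exact norm_inner_le_norm x y

lemma vec_norm_le {V : Matrix ι μ ℂ} (hV : (1 - V * Vᴴ).PosSemidef) (u : ι → ℂ) :
    (dotProduct (star (Vᴴ *ᵥ u)) (Vᴴ *ᵥ u)).re ≤ (dotProduct (star u) u).re := by
  have h0 := hV.dotProduct_mulVec_nonneg u
  have h1 : dotProduct (star (Vᴴ *ᵥ u)) (Vᴴ *ᵥ u)
      = dotProduct (star u) ((V * Vᴴ) *ᵥ u) := by
    rw [Matrix.star_mulVec, Matrix.conjTranspose_conjTranspose, Matrix.dotProduct_mulVec,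
      Matrix.dotProduct_mulVec, Matrix.vecMul_vecMul]
  have h2 : dotProduct (star u) ((1 - V * Vᴴ) *ᵥ u)
      = dotProduct (star u) u - dotProduct (star u) ((V * Vᴴ) *ᵥ u) := by
    rw [Matrix.sub_mulVec, dotProduct_sub, Matrix.one_mulVec]
  rw [h2] at h0
  rw [h1]
  have := (Complex.le_def.mp h0).1
  simp only [Complex.zero_re, Complex.sub_re] at this
  linarith

lemma trace_diagonal_mul (d : ι → ℂ) (M : Matrix ι ι ℂ) :
    (Matrix.diagonal d * M).trace = ∑ i, d i * M i i := by
  simp [Matrix.trace, Matrix.diag, Matrix.diagonal_mul]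

lemma conj_entry (N U : Matrix ι ι ℂ) (i : ι) :
    (Uᴴ * N * U) i i = dotProduct (star (fun a => U a i)) (N *ᵥ (fun a => U a i)) := by
  simp only [Matrix.mul_apply, Matrix.mulVec, dotProduct, Matrix.conjTranspose_apply,
    Pi.star_apply, RCLike.star_def, Finset.mul_sum, Finset.sum_mul]
  rw [Finset.sum_comm]
  refine Finset.sum_congr rfl fun a _ => Finset.sum_congr rfl fun b _ => by ring

lemma re_trace_mul_contraction_le {Q : Matrix ι ι ℂ} (hQ : Q.PosSemidef)
    (V W : Matrix ι μ ℂ) (hV : (1 - V * Vᴴ).PosSemidef) (hW : (1 - W * Wᴴ).PosSemidef) :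
    (Matrix.trace (Q * (V * Wᴴ))).re ≤ Q.trace.re := by
  set U : Matrix ι ι ℂ := (hQ.1.eigenvectorUnitary : Matrix ι ι ℂ) with hUdef
  have hU : Uᴴ * U = 1 := star_mul_eigU hQ.1
  have hU' : U * Uᴴ = 1 := eigU_mul_star hQ.1
  set lam : ι → ℝ := hQ.1.eigenvalues with hlamdef
  have hlam : ∀ i, 0 ≤ lam i := fun i => hQ.eigenvalues_nonneg i
  have hspec : Q = conjDiag U lam := spectral_conjDiag hQ
  set K : Matrix ι ι ℂ := V * Wᴴ with hKdef
  set M : Matrix ι ι ℂ := Uᴴ * K * U with hMdef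
  -- trace(Q*K) = Σ lam i * M i i
  have htr : Matrix.trace (Q * K) = ∑ i, (lam i : ℂ) * M i i := by
    rw [hspec]
    unfold conjDiag
    rw [Matrix.mul_assoc _ Uᴴ K, Matrix.mul_assoc U, Matrix.trace_mul_comm,
      Matrix.mul_assoc, Matrix.mul_assoc, trace_diagonal_mul]
    refine Finset.sum_congr rfl fun i _ => ?_
    rw [hMdef, hKdef, Matrix.mul_assoc Uᴴ, Matrix.mul_assoc V]
  -- each diagonal entry has real part ≤ 1
  have hentry : ∀ i, (M i i).re ≤ 1 := by
    intro i
    set u : ι → ℂ := fun a => U a i with hudef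
    have hM : M i i = dotProduct (star (Vᴴ *ᵥ u)) (Wᴴ *ᵥ u) := by
      rw [hMdef, hKdef, conj_entry]
      rw [Matrix.star_mulVec, Matrix.conjTranspose_conjTranspose, ← Matrix.mulVec_mulVec,
        Matrix.dotProduct_mulVec]
    have huu : dotProduct (star u) u = 1 := by
      have : dotProduct (star u) u = (Uᴴ * U) i i := by
        simp only [Matrix.mul_apply, Matrix.conjTranspose_apply, dotProduct,
          Pi.star_apply, RCLike.star_def, hudef]
      rw [this, hU]
      simp
    have hcs := dot_cs (Vᴴ *ᵥ u) (Wᴴ *ᵥ u)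
    have hVu := vec_norm_le hV u
    have hWu := vec_norm_le hW u
    rw [huu] at hVu hWu
    simp only [Complex.one_re] at hVu hWu
    have h1 : Real.sqrt ((dotProduct (star (Vᴴ *ᵥ u)) (Vᴴ *ᵥ u)).re) ≤ 1 := by
      rw [show (1:ℝ) = Real.sqrt 1 by simp]
      exact Real.sqrt_le_sqrt hVu
    have h2 : Real.sqrt ((dotProduct (star (Wᴴ *ᵥ u)) (Wᴴ *ᵥ u)).re) ≤ 1 := by
      rw [show (1:ℝ) = Real.sqrt 1 by simp]
      exact Real.sqrt_le_sqrt hWu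
    calc (M i i).re ≤ ‖M i i‖ := Complex.re_le_norm _
      _ = ‖dotProduct (star (Vᴴ *ᵥ u)) (Wᴴ *ᵥ u)‖ := by rw [hM]
      _ ≤ _ := dot_cs _ _
      _ ≤ 1 * 1 := by
          apply mul_le_mul h1 h2 (Real.sqrt_nonneg _) (by norm_num)
      _ = 1 := by norm_num
  -- trace Q = Σ lam
  have htrQ : Q.trace.re = ∑ i, lam i := by
    rw [hspec]
    unfold conjDiag
    rw [Matrix.mul_assoc, Matrix.trace_mul_comm, Matrix.mul_assoc, hU, Matrix.mul_one,
      Matrix.trace_diagonal, Complex.re_sum]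
    simp
  rw [htr, htrQ, Complex.re_sum]
  apply Finset.sum_le_sum
  intro i _
  have : ((lam i : ℂ) * M i i).re = lam i * (M i i).re := by
    simp [Complex.mul_re]
  rw [this]
  calc lam i * (M i i).re ≤ lam i * 1 := by
        apply mul_le_mul_of_nonneg_left (hentry i) (hlam i)
    _ = lam i := by ring

lemma msqrt_eq {A : Matrix ι ι ℂ} (h : A.PosSemidef) : msqrt A = h.sqrt := dif_pos h

lemma fidelity_eq_sqrt_trace {σ ρ : Matrix ι ι ℂ} (hσ : σ.PosSemidef) (hρ : ρ.PosSemidef)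
    {Q : Matrix ι ι ℂ} (hQ : Q.PosSemidef) (hQsq : Q * Q = hρ.sqrt * σ * hρ.sqrt) :
    fidelity σ ρ = Q.trace.re := by
  unfold fidelity
  rw [traceNorm_eq]
  rw [msqrt_eq hσ, msqrt_eq hρ]
  have hA : (hσ.sqrt * hρ.sqrt)ᴴ * (hσ.sqrt * hρ.sqrt) = hρ.sqrt * σ * hρ.sqrt := by
    rw [Matrix.conjTranspose_mul, hσ.posSemidef_sqrt.1.eq, hρ.posSemidef_sqrt.1.eq]
    rw [Matrix.mul_assoc, ← Matrix.mul_assoc hσ.sqrt, hσ.sqrt_mul_self, ← Matrix.mul_assoc]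
  have : Q = (Matrix.posSemidef_conjTranspose_mul_self (hσ.sqrt * hρ.sqrt)).sqrt := by
    apply Matrix.PosSemidef.eq_sqrt_of_sq_eq hQ
    rw [pow_two, hQsq, hA]
  rw [← this]

lemma re_trace_le_fidelity {σ ρ : Matrix ι ι ℂ} (hσ : σ.PosSemidef) (hρ : ρ.PosSemidef)
    (X Y : Matrix ι μ ℂ) (hX : X * Xᴴ = σ) (hY : Y * Yᴴ = ρ) :
    (Matrix.trace (Xᴴ * Y)).re ≤ fidelity σ ρ := by
  set R : Matrix ι ι ℂ := hρ.sqrt with hRdef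
  have hR : R.PosSemidef := hρ.posSemidef_sqrt
  have hRR : R * R = ρ := hρ.sqrt_mul_self
  obtain ⟨W, hYW, hWc⟩ := contraction_decomp hR Y (by rw [hY, hRR])
  have hGform : (R * X) * (R * X)ᴴ = R * σ * R := by
    rw [Matrix.conjTranspose_mul, hR.1.eq, ← Matrix.mul_assoc, Matrix.mul_assoc R X Xᴴ, hX]
  have hG : (R * σ * R).PosSemidef := by
    rw [← hGform]; exact Matrix.posSemidef_self_mul_conjTranspose _
  have hQP : (hG.sqrt).PosSemidef := hG.posSemidef_sqrt
  have hQQ : hG.sqrt * hG.sqrt = R * σ * R := hG.sqrt_mul_self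
  obtain ⟨V, hXV, hVc⟩ := contraction_decomp hQP (R * X) (by rw [hGform, hQQ])
  have h1 : (Matrix.trace (Xᴴ * Y)).re = (Matrix.trace (Yᴴ * X)).re := by
    have h : Yᴴ * X = (Xᴴ * Y)ᴴ := by
      rw [Matrix.conjTranspose_mul, Matrix.conjTranspose_conjTranspose]
    rw [h, Matrix.trace_conjTranspose]
    exact (Complex.conj_re _).symm
  have h2 : Matrix.trace (Yᴴ * X) = Matrix.trace (hG.sqrt * (V * Wᴴ)) := by
    rw [hYW, Matrix.conjTranspose_mul, hR.1.eq, Matrix.mul_assoc, hXV,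
      Matrix.trace_mul_comm, Matrix.mul_assoc]
  rw [h1, h2, fidelity_eq_sqrt_trace hσ hρ hQP hQQ]
  exact re_trace_mul_contraction_le hQP V W hVc hWc

lemma conjDiag_trace_re (U : Matrix ι ι ℂ) (hU : Uᴴ * U = 1) (f : ι → ℝ) :
    (conjDiag U f).trace.re = ∑ i, f i := by
  unfold conjDiag
  rw [Matrix.mul_assoc, Matrix.trace_mul_comm, Matrix.mul_assoc, hU, Matrix.mul_one,
    Matrix.trace_diagonal, Complex.re_sum]
  simp

lemma trace_fromBlocks' (A : Matrix ι ι ℂ) (B : Matrix ι μ ℂ) (C : Matrix μ ι ℂ)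
    (D : Matrix μ μ ℂ) :
    (Matrix.fromBlocks A B C D).trace = A.trace + D.trace := by
  simp [Matrix.trace, Fintype.sum_sum_type]

lemma sandwich (R M N : Matrix ι ι ℂ) : (R * M) * (R * N)ᴴ = R * (M * Nᴴ) * Rᴴ := by
  rw [Matrix.conjTranspose_mul, ← Matrix.mul_assoc, Matrix.mul_assoc R M Nᴴ]

lemma fidelity_achievable {σ ρ : Matrix ι ι ℂ} (hσ : σ.PosSemidef) (hρ : ρ.PosSemidef) :
    ∃ X Y : Matrix ι (ι ⊕ ι) ℂ, X * Xᴴ = σ ∧ Y * Yᴴ = ρ ∧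
      (Matrix.trace (Xᴴ * Y)).re = fidelity σ ρ := by
  set S : Matrix ι ι ℂ := hσ.sqrt with hSdef
  set R : Matrix ι ι ℂ := hρ.sqrt with hRdef
  have hSS : S * S = σ := hσ.sqrt_mul_self
  have hRR : R * R = ρ := hρ.sqrt_mul_self
  have hSh : Sᴴ = S := hσ.posSemidef_sqrt.1.eq
  have hRh : Rᴴ = R := hρ.posSemidef_sqrt.1.eq
  have hH : (R * σ * R).PosSemidef := by
    have : R * σ * R = (R * S) * (R * S)ᴴ := by
      rw [Matrix.conjTranspose_mul, hSh, hRh, ← Matrix.mul_assoc, Matrix.mul_assoc R S S, hSS]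
    rw [this]; exact Matrix.posSemidef_self_mul_conjTranspose _
  set V : Matrix ι ι ℂ := (hH.1.eigenvectorUnitary : Matrix ι ι ℂ) with hVdef
  have hV : Vᴴ * V = 1 := star_mul_eigU hH.1
  have hV' : V * Vᴴ = 1 := eigU_mul_star hH.1
  set lam : ι → ℝ := hH.1.eigenvalues with hlamdef
  have hlam : ∀ i, 0 ≤ lam i := fun i => hH.eigenvalues_nonneg i
  have hspec : R * σ * R = conjDiag V lam := spectral_conjDiag hH
  set sq : ι → ℝ := fun i => Real.sqrt (lam i) with hsqdef
  set isq : ι → ℝ := fun i => (Real.sqrt (lam i))⁻¹ with hisqdef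
  set pproj : ι → ℝ := fun i => if lam i = 0 then 0 else 1 with hpdef
  have hfunp : isq * lam * isq = pproj := by
    funext i
    by_cases h : lam i = 0
    · simp [hisqdef, hpdef, h]
    · have hpos : 0 < lam i := lt_of_le_of_ne (hlam i) (Ne.symm h)
      have hs : Real.sqrt (lam i) ≠ 0 := by positivity
      simp only [Pi.mul_apply, hisqdef, hpdef, if_neg h]
      rw [show lam i = Real.sqrt (lam i) * Real.sqrt (lam i) from
        (Real.mul_self_sqrt (hlam i)).symm]
      field_simp
      rw [Real.sqrt_sq (Real.sqrt_nonneg _)]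
  have hfunisq : isq * lam = sq := by
    funext i
    by_cases h : lam i = 0
    · simp [hisqdef, hsqdef, h]
    · have hs : Real.sqrt (lam i) ≠ 0 := by
        have hpos : 0 < lam i := lt_of_le_of_ne (hlam i) (Ne.symm h)
        positivity
      simp only [Pi.mul_apply, hisqdef, hsqdef]
      rw [show lam i = Real.sqrt (lam i) * Real.sqrt (lam i) from
        (Real.mul_self_sqrt (hlam i)).symm]
      field_simp
      rw [Real.sqrt_sq (Real.sqrt_nonneg _)]
  -- fidelity = ∑ √λ
  have hQsq : conjDiag V sq * conjDiag V sq = R * σ * R := by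
    rw [conjDiag_mul V hV]
    have : sq * sq = lam := by funext i; exact Real.mul_self_sqrt (hlam i)
    rw [this]
    exact hspec.symm
  have hfid : fidelity σ ρ = ∑ i, Real.sqrt (lam i) :=
    (fidelity_eq_sqrt_trace hσ hρ (conjDiag_posSemidef V sq (fun i => Real.sqrt_nonneg _))
      hQsq).trans (conjDiag_trace_re V hV sq)
  set A : Matrix ι ι ℂ := S * R with hAdef
  have hAA : Aᴴ * A = conjDiag V lam := by
    rw [hAdef, Matrix.conjTranspose_mul, hSh, hRh, ← hspec, Matrix.mul_assoc,
      ← Matrix.mul_assoc S S R, hSS, ← Matrix.mul_assoc]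
  set Bh : Matrix ι ι ℂ := conjDiag V isq * Aᴴ with hBhdef
  have hBhH : Bhᴴ = A * conjDiag V isq := by
    rw [hBhdef, Matrix.conjTranspose_mul, conjDiag_conjTranspose,
      Matrix.conjTranspose_conjTranspose]
  have hBB : Bh * Bhᴴ = conjDiag V pproj := by
    rw [hBhH, hBhdef, Matrix.mul_assoc, ← Matrix.mul_assoc Aᴴ A, hAA,
      ← Matrix.mul_assoc, conjDiag_mul V hV, conjDiag_mul V hV, hfunp]
  refine ⟨Matrix.fromCols S 0, Matrix.fromCols (R * Bh) (R * (1 - conjDiag V pproj)),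
    ?_, ?_, ?_⟩
  · rw [Matrix.conjTranspose_fromCols_eq_fromRows_conjTranspose,
      Matrix.fromCols_mul_fromRows]
    simp [hSh, hSS]
  · rw [Matrix.conjTranspose_fromCols_eq_fromRows_conjTranspose,
      Matrix.fromCols_mul_fromRows]
    have hp1 : (1 - conjDiag V pproj)ᴴ = 1 - conjDiag V pproj := by
      rw [Matrix.conjTranspose_sub, Matrix.conjTranspose_one, conjDiag_conjTranspose]
    have hidem : (1 - conjDiag V pproj) * (1 - conjDiag V pproj) = 1 - conjDiag V pproj := by
      rw [Matrix.mul_sub, Matrix.sub_mul, Matrix.sub_mul, Matrix.mul_one, Matrix.one_mul,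
        conjDiag_mul V hV]
      have : pproj * pproj = pproj := by
        funext i; by_cases h : lam i = 0 <;> simp [hpdef, h]
      rw [this]
      simp only [Matrix.mul_one]
      abel
    have e1 : (R * Bh) * (R * Bh)ᴴ = R * conjDiag V pproj * R := by
      rw [sandwich, hBB, hRh]
    have e2 : (R * (1 - conjDiag V pproj)) * (R * (1 - conjDiag V pproj))ᴴ =
        R * (1 - conjDiag V pproj) * R := by
      rw [sandwich, hp1, hidem, hRh]
    rw [e1, e2, ← Matrix.add_mul, ← Matrix.mul_add]
    have : conjDiag V pproj + (1 - conjDiag V pproj) = 1 := by abel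
    rw [this, Matrix.mul_one, hRR]
  · rw [Matrix.conjTranspose_fromCols_eq_fromRows_conjTranspose,
      Matrix.fromRows_mul_fromCols, trace_fromBlocks']
    have h0 : (0 : Matrix ι ι ℂ)ᴴ * (R * (1 - conjDiag V pproj)) = 0 := by simp
    rw [h0, Matrix.trace_zero, add_zero, hSh]
    have htr2 : Matrix.trace (S * (R * Bh)) = Matrix.trace (conjDiag V sq) := by
      rw [← Matrix.mul_assoc, ← hAdef, hBhdef, Matrix.trace_mul_comm, Matrix.mul_assoc, hAA,
        conjDiag_mul V hV, hfunisq]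
    rw [htr2, hfid]
    exact conjDiag_trace_re V hV sq

lemma posSemidef_real_smul {A : Matrix ι ι ℂ} (hA : A.PosSemidef) {c : ℝ} (hc : 0 ≤ c) :
    ((c : ℂ) • A).PosSemidef := by
  exact hA.smul (Complex.zero_le_real.mpr hc)

lemma posSemidef_sum {N : ℕ} (f : Fin N → Matrix ι ι ℂ) (hf : ∀ j, (f j).PosSemidef) :
    (∑ j, f j).PosSemidef := by
  classical
  induction (Finset.univ : Finset (Fin N)) using Finset.induction with
  | empty => simpa using Matrix.PosSemidef.zero
  | insert _ _ hj ih =>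
      rw [Finset.sum_insert hj]
      exact (hf _).add ih

lemma fidelity_strong_concavity {N : ℕ} (p : Fin N → ℝ) (hp : ∀ j, 0 ≤ p j)
    (σ ρ : Fin N → Matrix ι ι ℂ) (hσ : ∀ j, (σ j).PosSemidef) (hρ : ∀ j, (ρ j).PosSemidef) :
    ∑ j, p j * fidelity (σ j) (ρ j) ≤
      fidelity (∑ j, (p j : ℂ) • σ j) (∑ j, (p j : ℂ) • ρ j) := by
  have hσs : (∑ j, (p j : ℂ) • σ j).PosSemidef :=
    posSemidef_sum _ (fun j => posSemidef_real_smul (hσ j) (hp j))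
  have hρs : (∑ j, (p j : ℂ) • ρ j).PosSemidef :=
    posSemidef_sum _ (fun j => posSemidef_real_smul (hρ j) (hp j))
  choose X Y hX hY htr using fun j => fidelity_achievable (hσ j) (hρ j)
  set Xb : Matrix ι ((ι ⊕ ι) × Fin N) ℂ :=
    Matrix.of (fun a s => (Real.sqrt (p s.2) : ℂ) * X s.2 a s.1) with hXb
  set Yb : Matrix ι ((ι ⊕ ι) × Fin N) ℂ :=
    Matrix.of (fun a s => (Real.sqrt (p s.2) : ℂ) * Y s.2 a s.1) with hYb
  have key : ∀ (Z : Fin N → Matrix ι (ι ⊕ ι) ℂ),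
      (Matrix.of (fun a (s : (ι ⊕ ι) × Fin N) => (Real.sqrt (p s.2) : ℂ) * Z s.2 a s.1)) *
        (Matrix.of (fun a (s : (ι ⊕ ι) × Fin N) => (Real.sqrt (p s.2) : ℂ) * Z s.2 a s.1))ᴴ
      = ∑ j, (p j : ℂ) • (Z j * (Z j)ᴴ) := by
    intro Z
    ext a b
    simp only [Matrix.mul_apply, Matrix.conjTranspose_apply, Matrix.of_apply,
      Matrix.sum_apply, Matrix.smul_apply, Fintype.sum_prod_type, smul_eq_mul]
    rw [Finset.sum_comm]
    refine Finset.sum_congr rfl fun j _ => ?_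
    rw [Finset.mul_sum]
    refine Finset.sum_congr rfl fun t _ => ?_
    simp only [star_mul', Complex.conj_ofReal, RCLike.star_def]
    have : (Real.sqrt (p j) : ℂ) * (Real.sqrt (p j) : ℂ) = (p j : ℂ) := by
      rw [← Complex.ofReal_mul, Real.mul_self_sqrt (hp j)]
    rw [show ((Real.sqrt (p j) : ℂ)) * Z j a t * ((Real.sqrt (p j) : ℂ) * (starRingEnd ℂ) (Z j b t))
        = ((Real.sqrt (p j) : ℂ) * (Real.sqrt (p j) : ℂ)) * (Z j a t * (starRingEnd ℂ) (Z j b t))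
      from by ring, this]
  have hXbX : Xb * Xbᴴ = ∑ j, (p j : ℂ) • σ j := by
    rw [hXb, key]
    exact Finset.sum_congr rfl fun j _ => by rw [hX j]
  have hYbY : Yb * Ybᴴ = ∑ j, (p j : ℂ) • ρ j := by
    rw [hYb, key]
    exact Finset.sum_congr rfl fun j _ => by rw [hY j]
  have htrb : (Matrix.trace (Xbᴴ * Yb)).re = ∑ j, p j * fidelity (σ j) (ρ j) := by
    have : Matrix.trace (Xbᴴ * Yb) = ∑ j, (p j : ℂ) * Matrix.trace ((X j)ᴴ * Y j) := by
      simp only [Matrix.trace, Matrix.diag_apply, Matrix.mul_apply,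
        Matrix.conjTranspose_apply, Matrix.of_apply, Fintype.sum_prod_type, hXb, hYb]
      rw [Finset.sum_comm]
      refine Finset.sum_congr rfl fun j _ => ?_
      rw [Finset.mul_sum]
      refine Finset.sum_congr rfl fun t _ => ?_
      rw [Finset.mul_sum]
      refine Finset.sum_congr rfl fun a _ => ?_
      simp only [star_mul', Complex.conj_ofReal, RCLike.star_def]
      have : (Real.sqrt (p j) : ℂ) * (Real.sqrt (p j) : ℂ) = (p j : ℂ) := by
        rw [← Complex.ofReal_mul, Real.mul_self_sqrt (hp j)]
      calc (Real.sqrt (p j) : ℂ) * (starRingEnd ℂ) (X j a t) *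
            ((Real.sqrt (p j) : ℂ) * Y j a t)
          = ((Real.sqrt (p j) : ℂ) * (Real.sqrt (p j) : ℂ)) *
            ((starRingEnd ℂ) (X j a t) * Y j a t) := by ring
        _ = (p j : ℂ) * ((starRingEnd ℂ) (X j a t) * Y j a t) := by rw [this]
    rw [this, Complex.re_sum]
    refine Finset.sum_congr rfl fun j _ => ?_
    rw [← htr j]
    simp [Complex.mul_re]
  rw [← htrb]
  exact re_trace_le_fidelity hσs hρs Xb Yb hXbX hYbY

lemma psd_trace_re_nonneg {A : Matrix ι ι ℂ} (hA : A.PosSemidef) : 0 ≤ A.trace.re := by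
  have h : ∀ i, 0 ≤ (A i i).re := by
    intro i
    have h0 := hA.dotProduct_mulVec_nonneg (Pi.single i 1)
    have h1 : dotProduct (star (Pi.single i 1)) (A *ᵥ (Pi.single i 1)) = A i i := by
      simp [Matrix.mulVec_single, dotProduct, Pi.single_apply]
    rw [h1] at h0
    exact (Complex.le_def.mp h0).1
  rw [Matrix.trace, Complex.re_sum]
  exact Finset.sum_nonneg fun i _ => h i

lemma traceNorm_nonneg (A : Matrix ι ι ℂ) : 0 ≤ traceNorm A :=
  psd_trace_re_nonneg (Matrix.posSemidef_conjTranspose_mul_self A).posSemidef_sqrt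

lemma fidelity_nonneg (A B : Matrix ι ι ℂ) : 0 ≤ fidelity A B := traceNorm_nonneg _

lemma traceNorm_psd {A : Matrix ι ι ℂ} (hA : A.PosSemidef) : traceNorm A = A.trace.re := by
  rw [traceNorm_eq]
  have : A = (Matrix.posSemidef_conjTranspose_mul_self A).sqrt :=
    Matrix.PosSemidef.eq_sqrt_of_sq_eq hA _ (by rw [pow_two, hA.1.eq])
  rw [← this]

lemma fidelity_self {ρ : Matrix ι ι ℂ} (hρ : ρ.PosSemidef) : fidelity ρ ρ = ρ.trace.re := by
  unfold fidelity
  rw [msqrt_eq hρ, hρ.sqrt_mul_self, traceNorm_psd hρ]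

lemma purifiedDist_self {ρ : Matrix ι ι ℂ} (hρ : IsDensity ρ) : purifiedDist ρ ρ = 0 := by
  unfold purifiedDist genFid
  rw [fidelity_self hρ.1, hρ.2]
  norm_num

lemma H0_nonneg (ρ : Matrix ι ι ℂ) : 0 ≤ H0 ρ := by
  unfold H0
  rcases Nat.eq_zero_or_pos ρ.rank with h | h
  · simp [h]
  · exact Real.logb_nonneg (by norm_num) (by exact_mod_cast h)

lemma logb_nat_mono {m n : ℕ} (h : m ≤ n) : Real.logb 2 m ≤ Real.logb 2 n := by
  rcases Nat.eq_zero_or_pos m with hm | hm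
  · rcases Nat.eq_zero_or_pos n with hn | hn
    · simp [hm, hn]
    · rw [hm]
      simpa using Real.logb_nonneg (by norm_num) (by exact_mod_cast hn : (1:ℝ) ≤ n)
  · exact Real.logb_le_logb_of_le (by norm_num) (by exact_mod_cast hm) (by exact_mod_cast h)

lemma smoothH0_set_finite (ε : ℝ) (ρ : Matrix ι ι ℂ) :
    {x : ℝ | ∃ σ : Matrix ι ι ℂ, IsSubnormalized σ ∧ purifiedDist σ ρ ≤ ε ∧ x = H0 σ}.Finite := by
  apply Set.Finite.subset ((Set.finite_Iic (Fintype.card ι)).image (fun n : ℕ => Real.logb 2 n))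
  rintro x ⟨σ, _, _, rfl⟩
  exact ⟨σ.rank, σ.rank_le_card_width, rfl⟩

lemma smoothH0_bddBelow (ε : ℝ) (ρ : Matrix ι ι ℂ) :
    BddBelow {x : ℝ | ∃ σ : Matrix ι ι ℂ, IsSubnormalized σ ∧ purifiedDist σ ρ ≤ ε ∧ x = H0 σ} :=
  ⟨0, by rintro x ⟨σ, _, _, rfl⟩; exact H0_nonneg σ⟩

lemma smoothH0_attained {ε : ℝ} (hε : 0 ≤ ε) {ρ : Matrix ι ι ℂ} (hρ : IsDensity ρ) :
    ∃ σ : Matrix ι ι ℂ, IsSubnormalized σ ∧ purifiedDist σ ρ ≤ ε ∧ smoothH0 ε ρ = H0 σ := by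
  have hne : {x : ℝ | ∃ σ : Matrix ι ι ℂ,
      IsSubnormalized σ ∧ purifiedDist σ ρ ≤ ε ∧ x = H0 σ}.Nonempty := by
    refine ⟨H0 ρ, ρ, ⟨hρ.1, by rw [hρ.2]; norm_num⟩, ?_, rfl⟩
    rw [purifiedDist_self hρ]
    exact hε
  exact hne.csInf_mem (smoothH0_set_finite ε ρ)

lemma rank_add_le' (A B : Matrix ι ι ℂ) : (A + B).rank ≤ A.rank + B.rank := by
  unfold Matrix.rank
  have hle : LinearMap.range (A + B).mulVecLin ≤
      LinearMap.range A.mulVecLin ⊔ LinearMap.range B.mulVecLin := by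
    rintro x ⟨v, rfl⟩
    rw [Matrix.mulVecLin_add]
    exact Submodule.add_mem_sup ⟨v, rfl⟩ ⟨v, rfl⟩
  calc Module.finrank ℂ ↥(LinearMap.range (A + B).mulVecLin)
      ≤ Module.finrank ℂ ↥(LinearMap.range A.mulVecLin ⊔ LinearMap.range B.mulVecLin) :=
        Submodule.finrank_mono hle
    _ ≤ A.rank + B.rank := by
        have := Submodule.finrank_sup_add_finrank_inf_eq
          (LinearMap.range A.mulVecLin) (LinearMap.range B.mulVecLin)
        unfold Matrix.rank
        omega

lemma rank_sum_le {N : ℕ} (f : Fin N → Matrix ι ι ℂ) :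
    (∑ j, f j).rank ≤ ∑ j, (f j).rank := by
  classical
  induction (Finset.univ : Finset (Fin N)) using Finset.induction with
  | empty => simp
  | insert _ _ hj ih =>
      rw [Finset.sum_insert hj, Finset.sum_insert hj]
      exact (rank_add_le' _ _).trans (by omega)

lemma rank_csmul {c : ℂ} (hc : c ≠ 0) (A : Matrix ι ι ℂ) : (c • A).rank = A.rank := by
  have h1 : c • A = A * (c • (1 : Matrix ι ι ℂ)) := by
    rw [Matrix.mul_smul, Matrix.mul_one]
  rw [h1]
  apply Matrix.rank_mul_eq_left_of_isUnit_det
  rw [Matrix.det_smul, Matrix.det_one, mul_one]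
  exact (isUnit_iff_ne_zero.mpr (pow_ne_zero _ hc))

end
end Aux

/-- Quasi-convexity of the smooth zero-Rényi entropy. -/
theorem smoothH0_quasiconvex {N : ℕ} (hN : 0 < N) (ε : ℝ) (hε : 0 ≤ ε)
    (p : Fin N → ℝ) (ρ : Fin N → Matrix ι ι ℂ)
    (hp : ∀ j, 0 < p j) (hp1 : ∑ j, p j = 1) (hρ : ∀ j, IsDensity (ρ j)) :
    smoothH0 ε (∑ j, p j • ρ j) ≤ (⨆ j, smoothH0 ε (ρ j)) + Real.logb 2 N := by
  haveI : Nonempty (Fin N) := ⟨⟨0, hN⟩⟩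
  have hppos : ∀ j, (0:ℝ) ≤ p j := fun j => (hp j).le
  have hsm : (∑ j, p j • ρ j) = ∑ j, ((p j : ℂ)) • ρ j := by
    refine Finset.sum_congr rfl fun j _ => ?_
    ext a b
    simp [Complex.real_smul]
  choose σ hσsub hσdist hσH0 using fun j => smoothH0_attained hε (hρ j)
  set σbar : Matrix ι ι ℂ := ∑ j, ((p j : ℂ)) • σ j with hσbardef
  have hσbarP : σbar.PosSemidef :=
    posSemidef_sum _ fun j => posSemidef_real_smul (hσsub j).1 (hppos j)
  -- traces
  have htrσ : σbar.trace.re ≤ 1 := by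
    have h1 : σbar.trace.re = ∑ j, p j * (σ j).trace.re := by
      rw [hσbardef, Matrix.trace_sum, Complex.re_sum]
      refine Finset.sum_congr rfl fun j _ => ?_
      rw [Matrix.trace_smul, smul_eq_mul]
      simp [Complex.mul_re]
    rw [h1, ← hp1]
    exact Finset.sum_le_sum fun j _ => by
      have := (hσsub j).2
      nlinarith [hppos j]
  have htrρ : (∑ j, ((p j : ℂ)) • ρ j).trace = 1 := by
    rw [Matrix.trace_sum]
    have h : ∀ j ∈ Finset.univ, (((p j : ℂ)) • ρ j).trace = (p j : ℂ) := by
      intro j _; rw [Matrix.trace_smul, (hρ j).2, smul_eq_mul, mul_one]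
    rw [Finset.sum_congr rfl h]
    rw [show ∑ j, ((p j : ℂ)) = ((∑ j, p j : ℝ) : ℂ) by push_cast; ring, hp1]
    norm_num
  -- fidelity lower bounds
  have hFj : ∀ j, Real.sqrt (1 - ε^2) ≤ fidelity (σ j) (ρ j) := by
    intro j
    have hgen : genFid (σ j) (ρ j) = fidelity (σ j) (ρ j) := by
      unfold genFid
      rw [(hρ j).2]
      norm_num
    have hdist := hσdist j
    unfold purifiedDist at hdist
    rw [hgen] at hdist
    set F := fidelity (σ j) (ρ j) with hFdef
    have hF0 : 0 ≤ F := fidelity_nonneg _ _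
    by_cases hc : 1 - F^2 ≤ 0
    · have h1F : 1 ≤ F := by nlinarith
      have : Real.sqrt (1 - ε^2) ≤ 1 := Real.sqrt_le_one.mpr (by nlinarith)
      linarith
    · push_neg at hc
      have hsq : 1 - F^2 ≤ ε^2 := by
        have h2 : Real.sqrt (1 - F^2) ^ 2 ≤ ε^2 := by
          apply pow_le_pow_left₀ (Real.sqrt_nonneg _) hdist
        rwa [Real.sq_sqrt (by linarith : (0:ℝ) ≤ 1 - F^2)] at h2
      have : 1 - ε^2 ≤ F^2 := by linarith
      calc Real.sqrt (1 - ε^2) ≤ Real.sqrt (F^2) := Real.sqrt_le_sqrt this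
        _ = F := by rw [Real.sqrt_sq hF0]
  -- strong concavity
  have hFbar : Real.sqrt (1 - ε^2) ≤ fidelity σbar (∑ j, ((p j : ℂ)) • ρ j) := by
    calc Real.sqrt (1 - ε^2) = ∑ j, p j * Real.sqrt (1 - ε^2) := by
          rw [← Finset.sum_mul, hp1, one_mul]
      _ ≤ ∑ j, p j * fidelity (σ j) (ρ j) :=
          Finset.sum_le_sum fun j _ => mul_le_mul_of_nonneg_left (hFj j) (hppos j)
      _ ≤ _ := fidelity_strong_concavity p hppos σ ρ (fun j => (hσsub j).1) (fun j => (hρ j).1)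
  -- purified distance of the mixture
  have hdistbar : purifiedDist σbar (∑ j, ((p j : ℂ)) • ρ j) ≤ ε := by
    have hgen : genFid σbar (∑ j, ((p j : ℂ)) • ρ j) =
        fidelity σbar (∑ j, ((p j : ℂ)) • ρ j) := by
      unfold genFid
      rw [htrρ]
      norm_num
    unfold purifiedDist
    rw [hgen]
    set F := fidelity σbar (∑ j, ((p j : ℂ)) • ρ j) with hFdef
    have hF0 : 0 ≤ F := fidelity_nonneg _ _
    rcases le_or_gt 1 ε with h1ε | h1ε
    · calc Real.sqrt (1 - F^2) ≤ Real.sqrt 1 := Real.sqrt_le_sqrt (by nlinarith)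
        _ = 1 := Real.sqrt_one
        _ ≤ ε := h1ε
    · have h0 : 0 ≤ 1 - ε^2 := by nlinarith
      have hsq : 1 - ε^2 ≤ F^2 := by
        have h2 : Real.sqrt (1 - ε^2) ^ 2 ≤ F^2 := pow_le_pow_left₀ (Real.sqrt_nonneg _) hFbar 2
        rwa [Real.sq_sqrt h0] at h2
      calc Real.sqrt (1 - F^2) ≤ Real.sqrt (ε^2) := Real.sqrt_le_sqrt (by linarith)
        _ = ε := Real.sqrt_sq hε
  -- LHS ≤ H0 σbar
  have h1 : smoothH0 ε (∑ j, p j • ρ j) ≤ H0 σbar := by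
    rw [hsm]
    exact csInf_le (smoothH0_bddBelow _ _) ⟨σbar, ⟨hσbarP, htrσ⟩, hdistbar, rfl⟩
  -- rank bound
  obtain ⟨j0, -, hj0⟩ := Finset.exists_max_image (Finset.univ : Finset (Fin N))
    (fun j => (σ j).rank) ⟨Classical.arbitrary _, Finset.mem_univ _⟩
  have hrank : σbar.rank ≤ N * (σ j0).rank := by
    calc σbar.rank ≤ ∑ j, (((p j : ℂ)) • σ j).rank := rank_sum_le _
      _ = ∑ j, (σ j).rank := Finset.sum_congr rfl fun j _ =>
          rank_csmul (Complex.ofReal_ne_zero.mpr (hp j).ne') _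
      _ ≤ ∑ _j : Fin N, (σ j0).rank :=
          Finset.sum_le_sum fun j _ => hj0 j (Finset.mem_univ j)
      _ = N * (σ j0).rank := by
          rw [Finset.sum_const, Finset.card_univ, Fintype.card_fin, smul_eq_mul]
  have hbdd : BddAbove (Set.range fun j => smoothH0 ε (ρ j)) :=
    Set.Finite.bddAbove (Set.finite_range _)
  have hsup : ∀ j, smoothH0 ε (ρ j) ≤ ⨆ j, smoothH0 ε (ρ j) := fun j => le_ciSup hbdd j
  have hlogN : 0 ≤ Real.logb 2 N := by
    have := logb_nat_mono (show 1 ≤ N from hN)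
    simpa using this
  have h2 : H0 σbar ≤ (⨆ j, smoothH0 ε (ρ j)) + Real.logb 2 N := by
    have hsup0 : 0 ≤ ⨆ j, smoothH0 ε (ρ j) := by
      have h := hsup j0
      rw [hσH0 j0] at h
      exact le_trans (H0_nonneg _) h
    rcases Nat.eq_zero_or_pos ((σ j0).rank) with hm | hm
    · have hz : σbar.rank = 0 := by
        rw [hm, Nat.mul_zero] at hrank
        omega
      unfold H0
      rw [hz]
      simp only [Nat.cast_zero, Real.logb_zero]
      linarith
    · calc H0 σbar = Real.logb 2 σbar.rank := rfl
        _ ≤ Real.logb 2 ((N * (σ j0).rank : ℕ) : ℝ) := logb_nat_mono hrank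
        _ = Real.logb 2 ((N : ℝ) * ((σ j0).rank : ℝ)) := by push_cast; ring_nf
        _ = Real.logb 2 (N : ℝ) + Real.logb 2 ((σ j0).rank : ℝ) :=
            Real.logb_mul (by exact_mod_cast hN.ne') (by exact_mod_cast hm.ne')
        _ ≤ Real.logb 2 (N : ℝ) + (⨆ j, smoothH0 ε (ρ j)) := by
            have h := hsup j0
            rw [hσH0 j0] at h
            unfold H0 at h
            linarith
        _ = (⨆ j, smoothH0 ε (ρ j)) + Real.logb 2 N := by ring
  linarith

end QIT
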